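/- arXiv:2410.13389 — 5 statements merged into one kernel-verified Lean document; each statement's English description precedes it below -/
import Mathlib

section
/- Let A be an n×n real matrix that is Hurwitz, i.e., every eigenvalue of its complexification has strictly negative real part. Then there exists a symmetric positive-definite n×n real matrix P satisfying the Lyapunov matrix equation P·A + Aᵀ·P = −I, where I is the identity matrix. -/
open Matrix

/-- A real square matrix is Hurwitz if every eigenvalue of its complexification
has strictly negative real part. -/
def IsHurwitz {n : ℕ} (A : Matrix (Fin n) (Fin n) ℝ) : Prop :=
  ∀ μ : ℂ, μ ∈ spectrum ℂ (A.map (Complex.ofReal)) → μ.re < 0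

open NormedSpace MeasureTheory Filter Set Finset
open scoped Topology NNReal

attribute [local instance] Matrix.linftyOpNormedRing Matrix.linftyOpNormedAlgebra

noncomputable instance matTopOp {m : Type*} [Fintype m] [DecidableEq m] {𝕜 : Type*} [NormedRing 𝕜] :
    TopologicalSpace (Matrix m m 𝕜) :=
  (Matrix.linftyOpNormedRing : NormedRing (Matrix m m 𝕜)).toUniformSpace.toTopologicalSpace

section LyapunovAux
variable {n : ℕ}

/-- mulVec by a fixed vector, as a continuous linear map in the matrix. -/
noncomputable def mulVecCLM (v : Fin n → ℂ) :
    Matrix (Fin n) (Fin n) ℂ →L[ℂ] (Fin n → ℂ) :=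
  LinearMap.toContinuousLinearMap
    { toFun := fun M => M *ᵥ v
      map_add' := fun M M' => Matrix.add_mulVec M M' v
      map_smul' := fun c M => Matrix.smul_mulVec c M v }

@[simp] lemma mulVecCLM_apply (v : Fin n → ℂ) (M : Matrix (Fin n) (Fin n) ℂ) :
    mulVecCLM v M = M *ᵥ v := rfl

lemma decay_aux {k : ℕ} (B N : Matrix (Fin n) (Fin n) ℂ) (μ : ℂ)
    (hN : N = B - μ • 1) {ε : ℝ} (hε : 0 < ε) (hμ : μ.re ≤ -(2*ε))
    (v : Fin n → ℂ) (hv : (N ^ k) *ᵥ v = 0) :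
    ∃ C : ℝ, 0 ≤ C ∧ ∀ t : ℝ, 0 ≤ t →
      ‖(exp ((t:ℂ) • B)) *ᵥ v‖ ≤ C * Real.exp (-ε * t) := by
  refine ⟨∑ j ∈ range k, ε⁻¹ ^ j * ‖(N ^ j) *ᵥ v‖, ?_, ?_⟩
  · exact Finset.sum_nonneg fun j _ => mul_nonneg (pow_nonneg (by positivity) _) (norm_nonneg _)
  intro t ht
  have hBsplit : (t:ℂ) • B = (t:ℂ) • N + ((t:ℂ) * μ) • (1 : Matrix (Fin n) (Fin n) ℂ) := by
    rw [hN]; rw [smul_sub, smul_smul]; ring_nf; abel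
  have hcomm : Commute ((t:ℂ) • N) (((t:ℂ) * μ) • (1 : Matrix (Fin n) (Fin n) ℂ)) :=
    ((Commute.one_right N).smul_left _).smul_right _
  have hsplit : exp ((t:ℂ) • B) = Complex.exp ((t:ℂ) * μ) • exp ((t:ℂ) • N) := by
    rw [hBsplit, exp_add_of_commute hcomm]
    have h1 : (((t:ℂ) * μ) • (1 : Matrix (Fin n) (Fin n) ℂ)) =
        algebraMap ℂ (Matrix (Fin n) (Fin n) ℂ) ((t:ℂ) * μ) := by
      rw [Algebra.algebraMap_eq_smul_one]
    rw [h1, ← algebraMap_exp_comm, Algebra.algebraMap_eq_smul_one, Complex.exp_eq_exp_ℂ]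
    rw [mul_smul_one]
  -- expand exp of nilpotent part applied to v
  have hsum : exp ((t:ℂ) • N) *ᵥ v
      = ∑ j ∈ range k, (((j.factorial : ℂ))⁻¹ * (t:ℂ) ^ j) • ((N ^ j) *ᵥ v) := by
    have h0 : exp ((t:ℂ) • N) = ∑' j : ℕ, ((j.factorial : ℂ))⁻¹ • ((t:ℂ) • N) ^ j := by
      rw [exp_eq_tsum ℂ]
    have h1 : exp ((t:ℂ) • N) *ᵥ v
        = ∑' j : ℕ, ((j.factorial : ℂ))⁻¹ • (((t:ℂ) • N) ^ j) *ᵥ v := by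
      rw [h0, ← mulVecCLM_apply v]
      rw [(mulVecCLM v).map_tsum (expSeries_summable' (𝕂 := ℂ) ((t:ℂ) • N))]
      simp
    rw [h1]
    rw [tsum_eq_sum (s := range k) ?_]
    · apply Finset.sum_congr rfl
      intro j _
      rw [smul_pow, Matrix.smul_mulVec, smul_smul]
    · intro j hj
      have hjk : k ≤ j := by simpa using hj
      have : (N ^ j) *ᵥ v = 0 := by
        have : N ^ j = N ^ (j - k) * N ^ k := by rw [← pow_add]; congr 1; omega
        rw [this, ← Matrix.mulVec_mulVec, hv, Matrix.mulVec_zero]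
      rw [smul_pow, Matrix.smul_mulVec, this, smul_zero, smul_zero]
  rw [hsplit, Matrix.smul_mulVec, norm_smul, hsum]
  have habs : ‖Complex.exp ((t:ℂ) * μ)‖ = Real.exp (t * μ.re) := by
    rw [Complex.norm_exp]
    congr 1
    simp [Complex.mul_re]
  have hnorm : ‖∑ j ∈ range k, (((j.factorial : ℂ))⁻¹ * (t:ℂ) ^ j) • ((N ^ j) *ᵥ v)‖
      ≤ (∑ j ∈ range k, ε⁻¹ ^ j * ‖(N ^ j) *ᵥ v‖) * Real.exp (ε * t) := by
    refine le_trans (norm_sum_le _ _) ?_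
    rw [Finset.sum_mul]
    apply Finset.sum_le_sum
    intro j _
    rw [norm_smul]
    have h2 : ‖((j.factorial : ℂ))⁻¹ * (t:ℂ) ^ j‖ = t ^ j / j.factorial := by
      rw [norm_mul, norm_inv, norm_pow, Complex.norm_real, Real.norm_eq_abs,
        Complex.norm_natCast, abs_of_nonneg ht]
      rw [div_eq_inv_mul]
    rw [h2]
    have h3 : t ^ j / j.factorial ≤ ε⁻¹ ^ j * Real.exp (ε * t) := by
      have h4 := Real.pow_div_factorial_le_exp (x := ε * t) (by positivity) j
      have h5 : (ε * t) ^ j / j.factorial = ε ^ j * (t ^ j / j.factorial) := by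
        rw [mul_pow]; ring
      rw [h5] at h4
      have h6 : t ^ j / j.factorial ≤ ε⁻¹ ^ j * ((ε:ℝ) ^ j * (t ^ j / j.factorial)) := by
        rw [← mul_assoc, ← mul_pow, inv_mul_cancel₀ (ne_of_gt hε), one_pow, one_mul]
      exact h6.trans (by
        apply mul_le_mul_of_nonneg_left h4 (pow_nonneg (by positivity) _))
    calc t ^ j / j.factorial * ‖(N ^ j) *ᵥ v‖
        ≤ (ε⁻¹ ^ j * Real.exp (ε * t)) * ‖(N ^ j) *ᵥ v‖ :=
          mul_le_mul_of_nonneg_right h3 (norm_nonneg _)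
      _ = ε⁻¹ ^ j * ‖(N ^ j) *ᵥ v‖ * Real.exp (ε * t) := by ring
  rw [habs]
  calc Real.exp (t * μ.re) * ‖∑ j ∈ range k, (((j.factorial : ℂ))⁻¹ * (t:ℂ) ^ j) • ((N ^ j) *ᵥ v)‖
      ≤ Real.exp (-(2*ε) * t) * ((∑ j ∈ range k, ε⁻¹ ^ j * ‖(N ^ j) *ᵥ v‖) * Real.exp (ε * t)) := by
        apply mul_le_mul (Real.exp_le_exp.2 (by nlinarith)) hnorm (norm_nonneg _) (Real.exp_nonneg _)
    _ = (∑ j ∈ range k, ε⁻¹ ^ j * ‖(N ^ j) *ᵥ v‖) * (Real.exp (-(2*ε) * t) * Real.exp (ε * t)) := by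
        ring
    _ = (∑ j ∈ range k, ε⁻¹ ^ j * ‖(N ^ j) *ᵥ v‖) * Real.exp (-ε * t) := by
        rw [← Real.exp_add]
        congr 1
        ring

lemma vec_decay (A : Matrix (Fin n) (Fin n) ℝ)
    (hA : ∀ μ : ℂ, μ ∈ spectrum ℂ (A.map (Complex.ofReal)) → μ.re < 0) :
    ∃ ε : ℝ, 0 < ε ∧ ∀ v : Fin n → ℂ, ∃ C : ℝ, 0 ≤ C ∧ ∀ t : ℝ, 0 ≤ t →
      ‖(exp ((t:ℂ) • A.map (Complex.ofReal))) *ᵥ v‖ ≤ C * Real.exp (-ε * t) := by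
  classical
  set B := A.map (Complex.ofReal) with hB
  have hfin : (spectrum ℂ B).Finite := Matrix.finite_spectrum B
  set Fs : Finset ℝ := hfin.toFinset.image Complex.re with hFs
  have key : ∃ ε : ℝ, 0 < ε ∧ ∀ μ : ℂ, μ ∈ spectrum ℂ B → μ.re ≤ -(2*ε) := by
    by_cases h : Fs.Nonempty
    · refine ⟨-(Fs.max' h)/2, ?_, ?_⟩
      · obtain ⟨μ, hμS, hμr⟩ := Finset.mem_image.1 (Fs.max'_mem h)
        have := hA μ (hfin.mem_toFinset.1 hμS)
        rw [hμr] at this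
        linarith
      · intro μ hμ
        have hle : μ.re ≤ Fs.max' h :=
          Fs.le_max' μ.re (Finset.mem_image.2 ⟨μ, hfin.mem_toFinset.2 hμ, rfl⟩)
        linarith
    · refine ⟨1, one_pos, ?_⟩
      intro μ hμ
      exact absurd ⟨μ.re, Finset.mem_image.2 ⟨μ, hfin.mem_toFinset.2 hμ, rfl⟩⟩ h
  obtain ⟨ε, hεpos, hspec⟩ := key
  refine ⟨ε, hεpos, ?_⟩
  set f : Module.End ℂ (Fin n → ℂ) := Matrix.toLinAlgEquiv' B with hf
  have hsup := Module.End.iSup_maxGenEigenspace_eq_top f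
  intro v
  have hv : v ∈ ⨆ μ : ℂ, f.maxGenEigenspace μ := by rw [hsup]; trivial
  refine Submodule.iSup_induction _ (motive := fun w => ∃ C : ℝ, 0 ≤ C ∧ ∀ t : ℝ, 0 ≤ t →
      ‖(exp ((t:ℂ) • B)) *ᵥ w‖ ≤ C * Real.exp (-ε * t)) hv ?_ ?_ ?_
  · intro μ w hw
    by_cases hw0 : w = 0
    · exact ⟨0, le_refl 0, fun t ht => by simp [hw0, Matrix.mulVec_zero]⟩
    obtain ⟨k, hk⟩ := (Module.End.mem_maxGenEigenspace f μ w).1 hw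
    have hμS : μ ∈ spectrum ℂ B := by
      have hev : f.HasEigenvalue μ := by
        apply Module.End.hasEigenvalue_of_hasGenEigenvalue (k := k)
        refine Submodule.ne_bot_iff _ |>.2 ⟨w, ?_, hw0⟩
        rw [Module.End.mem_genEigenspace_nat]
        exact hk
      have := Module.End.hasEigenvalue_iff_mem_spectrum.1 hev
      rwa [hf, AlgEquiv.spectrum_eq (Matrix.toLinAlgEquiv') B] at this
    have hμle := hspec μ hμS
    have hkm : ((B - μ • 1) ^ k) *ᵥ w = 0 := by
      have h2 : Matrix.toLinAlgEquiv' ((B - μ • 1) ^ k) w = 0 := by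
        rw [map_pow, map_sub, _root_.map_smul, _root_.map_one]
        exact hk
      rw [Matrix.toLinAlgEquiv'_apply] at h2
      exact h2
    exact decay_aux B (B - μ • 1) μ rfl hεpos hμle w hkm
  · exact ⟨0, le_refl 0, fun t ht => by simp [Matrix.mulVec_zero]⟩
  · rintro w₁ w₂ ⟨C₁, hC₁, h₁⟩ ⟨C₂, hC₂, h₂⟩
    refine ⟨C₁ + C₂, by linarith, fun t ht => ?_⟩
    rw [Matrix.mulVec_add]
    calc ‖exp ((t:ℂ) • B) *ᵥ w₁ + exp ((t:ℂ) • B) *ᵥ w₂‖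
        ≤ ‖exp ((t:ℂ) • B) *ᵥ w₁‖ + ‖exp ((t:ℂ) • B) *ᵥ w₂‖ := norm_add_le _ _
      _ ≤ C₁ * Real.exp (-ε * t) + C₂ * Real.exp (-ε * t) := add_le_add (h₁ t ht) (h₂ t ht)
      _ = (C₁ + C₂) * Real.exp (-ε * t) := by ring

lemma matrix_norm_le_of_entries (M : Matrix (Fin n) (Fin n) ℝ) (c : ℝ) (hc : 0 ≤ c)
    (h : ∀ i j, ‖M i j‖ ≤ c) : ‖M‖ ≤ n * c := by
  have hc' : ∀ i j, ‖M i j‖₊ ≤ c.toNNReal := fun i j => by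
    rw [← NNReal.coe_le_coe, coe_nnnorm, Real.coe_toNNReal c hc]
    exact h i j
  rw [Matrix.linfty_opNorm_def]
  have h2 : (Finset.univ.sup fun i => ∑ j, ‖M i j‖₊) ≤ (n : ℝ≥0) * c.toNNReal := by
    apply Finset.sup_le
    intro i _
    calc ∑ j, ‖M i j‖₊ ≤ ∑ _j : Fin n, c.toNNReal := Finset.sum_le_sum fun j _ => hc' i j
      _ = (n : ℝ≥0) * c.toNNReal := by simp [Finset.sum_const, nsmul_eq_mul]
  calc ((Finset.univ.sup fun i => ∑ j, ‖M i j‖₊ : ℝ≥0) : ℝ)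
      ≤ (((n : ℝ≥0) * c.toNNReal : ℝ≥0) : ℝ) := NNReal.coe_le_coe.2 h2
    _ = n * c := by push_cast [Real.coe_toNNReal c hc]; ring

lemma entry_decay (A : Matrix (Fin n) (Fin n) ℝ)
    (hA : ∀ μ : ℂ, μ ∈ spectrum ℂ (A.map (Complex.ofReal)) → μ.re < 0) :
    ∃ ε : ℝ, 0 < ε ∧ ∃ C : ℝ, 0 ≤ C ∧ ∀ t : ℝ, 0 ≤ t →
      ∀ i j, ‖(exp (t • A)) i j‖ ≤ C * Real.exp (-ε * t) := by
  classical
  obtain ⟨ε, hεpos, hvd⟩ := vec_decay A hA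
  choose C hC0 hC using fun j : Fin n => hvd (Pi.single j 1)
  refine ⟨ε, hεpos, ∑ j, C j, Finset.sum_nonneg fun j _ => hC0 j, ?_⟩
  intro t ht i j
  set B := A.map (Complex.ofReal) with hB
  -- exp commutes with the entrywise coercion to ℂ
  have hmapexp : (exp (t • A)).map Complex.ofReal = exp ((t:ℂ) • B) := by
    have hcont : Continuous fun M : Matrix (Fin n) (Fin n) ℝ => M.map Complex.ofReal :=
      ((Algebra.ofId ℝ ℂ).mapMatrix (m := Fin n)).toLinearMap.continuous_of_finiteDimensional
    have h1 := map_exp ((Algebra.ofId ℝ ℂ).mapMatrix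
      (m := Fin n)) hcont (t • A)
    have h2 : ((Algebra.ofId ℝ ℂ).mapMatrix (m := Fin n)) (t • A)
        = t • B := by
      rw [_root_.map_smul]
      ext i j
      simp [AlgHom.mapMatrix_apply, Matrix.map_apply, Algebra.ofId_apply, hB]
    have h3 : ((Algebra.ofId ℝ ℂ).mapMatrix (m := Fin n)) (exp (t • A))
        = (exp (t • A)).map Complex.ofReal := by
      ext i j
      simp [AlgHom.mapMatrix_apply, Matrix.map_apply, Algebra.ofId_apply]
    rw [h3, h2] at h1
    rw [h1]
    congr 1
  have hentry : ‖(exp (t • A)) i j‖ = ‖(exp ((t:ℂ) • B)) i j‖ := by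
    rw [← hmapexp]
    simp [Matrix.map_apply, Complex.norm_real]
  rw [hentry]
  have hcol : (exp ((t:ℂ) • B)) i j = ((exp ((t:ℂ) • B)) *ᵥ Pi.single j 1) i := by
    rw [Matrix.mulVec_single]
    simp
  rw [hcol]
  calc ‖((exp ((t:ℂ) • B)) *ᵥ Pi.single j 1) i‖
      ≤ ‖(exp ((t:ℂ) • B)) *ᵥ Pi.single j 1‖ := norm_le_pi_norm _ i
    _ ≤ C j * Real.exp (-ε * t) := hC j t ht
    _ ≤ (∑ j', C j') * Real.exp (-ε * t) := by
        apply mul_le_mul_of_nonneg_right _ (Real.exp_nonneg _)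
        exact Finset.single_le_sum (fun j' _ => hC0 j') (Finset.mem_univ j)

theorem lyapunov_equation_solution' (A : Matrix (Fin n) (Fin n) ℝ)
    (hA : ∀ μ : ℂ, μ ∈ spectrum ℂ (A.map (Complex.ofReal)) → μ.re < 0) :
    ∃ P : Matrix (Fin n) (Fin n) ℝ,
      P.IsSymm ∧ P.PosDef ∧ P * A + Aᵀ * P = -(1 : Matrix (Fin n) (Fin n) ℝ) := by
  classical
  obtain ⟨ε, hεpos, C, hC0, hC⟩ := entry_decay A hA
  set E : ℝ → Matrix (Fin n) (Fin n) ℝ := fun t => exp (t • A) with hE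
  set F : ℝ → Matrix (Fin n) (Fin n) ℝ := fun t => (E t)ᵀ * E t with hF
  -- norm bounds
  have hEnorm : ∀ t : ℝ, 0 ≤ t → ‖E t‖ ≤ n * C * Real.exp (-ε * t) := by
    intro t ht
    have := matrix_norm_le_of_entries (E t) (C * Real.exp (-ε * t))
      (mul_nonneg hC0 (Real.exp_nonneg _)) (fun i j => hC t ht i j)
    calc ‖E t‖ ≤ n * (C * Real.exp (-ε * t)) := this
      _ = n * C * Real.exp (-ε * t) := by ring
  have hETnorm : ∀ t : ℝ, 0 ≤ t → ‖(E t)ᵀ‖ ≤ n * C * Real.exp (-ε * t) := by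
    intro t ht
    have := matrix_norm_le_of_entries (E t)ᵀ (C * Real.exp (-ε * t))
      (mul_nonneg hC0 (Real.exp_nonneg _)) (fun i j => hC t ht j i)
    calc ‖(E t)ᵀ‖ ≤ n * (C * Real.exp (-ε * t)) := this
      _ = n * C * Real.exp (-ε * t) := by ring
  set D : ℝ := (n * C) ^ 2 with hD
  have hD0 : 0 ≤ D := sq_nonneg _
  have hFnorm : ∀ t : ℝ, 0 ≤ t → ‖F t‖ ≤ D * Real.exp (-(2 * ε) * t) := by
    intro t ht
    calc ‖F t‖ ≤ ‖(E t)ᵀ‖ * ‖E t‖ := norm_mul_le _ _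
      _ ≤ (n * C * Real.exp (-ε * t)) * (n * C * Real.exp (-ε * t)) := by
          apply mul_le_mul (hETnorm t ht) (hEnorm t ht) (norm_nonneg _)
          positivity
      _ = D * (Real.exp (-ε * t) * Real.exp (-ε * t)) := by rw [hD]; ring
      _ = D * Real.exp (-(2 * ε) * t) := by rw [← Real.exp_add]; congr 1; ring
  -- continuity and derivative
  have hEderiv : ∀ t : ℝ, HasDerivAt E (E t * A) t := fun t =>
    hasDerivAt_exp_smul_const A t
  have hEcont : Continuous E := by
    apply continuous_iff_continuousAt.2
    intro t
    exact (hEderiv t).continuousAt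
  have hFcont : Continuous F := ((((Matrix.transposeLinearEquiv (Fin n) (Fin n) ℝ ℝ).toLinearMap.continuous_of_finiteDimensional).comp hEcont).mul hEcont)
  have hFderiv : ∀ t : ℝ, HasDerivAt F (Aᵀ * F t + F t * A) t := by
    intro t
    have hT : HasDerivAt (fun t => (E t)ᵀ) ((E t * A)ᵀ) t := by
      have := (Matrix.transposeLinearEquiv (Fin n) (Fin n) ℝ ℝ).toLinearMap
        |>.toContinuousLinearMap.hasFDerivAt.comp_hasDerivAt t (hEderiv t)
      exact this
    have hmul := (hT.mul (hEderiv t))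
    have hder : Aᵀ * F t + F t * A = (E t * A)ᵀ * E t + (E t)ᵀ * (E t * A) := by
      rw [Matrix.transpose_mul]
      refine congrArg₂ (· + ·) ?_ ?_
      · exact (mul_assoc _ _ _).symm
      · exact mul_assoc _ _ _
    rw [← hder] at hmul
    exact hmul
  -- integrability
  have hexp2 : IntegrableOn (fun t : ℝ => D * Real.exp (-(2*ε) * t)) (Ioi 0) := by
    exact (exp_neg_integrableOn_Ioi 0 (by positivity : (0:ℝ) < 2*ε)).const_mul D
  have hFint : IntegrableOn F (Ioi (0:ℝ)) := by
    apply Integrable.mono' hexp2 (hFcont.aestronglyMeasurable.restrict)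
    rw [ae_restrict_iff' measurableSet_Ioi]
    exact ae_of_all _ fun t ht => hFnorm t (le_of_lt ht)
  have hF'int : IntegrableOn (fun t => Aᵀ * F t + F t * A) (Ioi (0:ℝ)) := by
    have hcont' : Continuous fun t => Aᵀ * F t + F t * A :=
      ((continuous_const.mul hFcont).add (hFcont.mul continuous_const))
    apply Integrable.mono' (hexp2.const_mul (‖Aᵀ‖ + ‖A‖)) (hcont'.aestronglyMeasurable.restrict)
    rw [ae_restrict_iff' measurableSet_Ioi]
    refine ae_of_all _ fun t ht => ?_
    have h1 : ‖Aᵀ * F t + F t * A‖ ≤ (‖Aᵀ‖ + ‖A‖) * ‖F t‖ := by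
      calc ‖Aᵀ * F t + F t * A‖ ≤ ‖Aᵀ * F t‖ + ‖F t * A‖ := norm_add_le _ _
        _ ≤ ‖Aᵀ‖ * ‖F t‖ + ‖F t‖ * ‖A‖ := add_le_add (norm_mul_le _ _) (norm_mul_le _ _)
        _ = (‖Aᵀ‖ + ‖A‖) * ‖F t‖ := by ring
    calc ‖Aᵀ * F t + F t * A‖ ≤ (‖Aᵀ‖ + ‖A‖) * ‖F t‖ := h1
      _ ≤ (‖Aᵀ‖ + ‖A‖) * (D * Real.exp (-(2*ε) * t)) := by
          apply mul_le_mul_of_nonneg_left (hFnorm t (le_of_lt ht))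
          positivity
  -- limit at infinity
  have hFtend : Tendsto F atTop (𝓝 0) := by
    have h1 : Tendsto (fun t : ℝ => (2*ε) * t) atTop atTop :=
      Tendsto.const_mul_atTop (by positivity) tendsto_id
    have h2 : Tendsto (fun t : ℝ => Real.exp (-((2*ε) * t))) atTop (𝓝 0) :=
      Real.tendsto_exp_neg_atTop_nhds_zero.comp h1
    have h3 : Tendsto (fun t : ℝ => D * Real.exp (-((2*ε) * t))) atTop (𝓝 (D * 0)) :=
      h2.const_mul D
    rw [mul_zero] at h3
    have h4 : ∀ᶠ t in atTop, ‖F t‖ ≤ D * Real.exp (-((2*ε) * t)) := by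
      filter_upwards [Ici_mem_atTop (0:ℝ)] with t ht
      have := hFnorm t ht
      rwa [show -(2*ε) * t = -((2*ε)*t) by ring] at this
    exact squeeze_zero_norm' h4 h3
  -- FTC
  have hFTC : ∫ t in Ioi (0:ℝ), (Aᵀ * F t + F t * A) = 0 - F 0 :=
    integral_Ioi_of_hasDerivAt_of_tendsto' (fun t _ => hFderiv t) hF'int hFtend
  have hF0 : F 0 = 1 := by
    rw [hF, hE]
    simp only [zero_smul, exp_zero, Matrix.transpose_one, one_mul]
  set P : Matrix (Fin n) (Fin n) ℝ := ∫ t in Ioi (0:ℝ), F t with hP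
  -- the integral of the derivative splits
  have hLup : ∫ t in Ioi (0:ℝ), Aᵀ * F t = Aᵀ * P := by
    have L := (LinearMap.mulLeft ℝ (Aᵀ)).toContinuousLinearMap
    have := ContinuousLinearMap.integral_comp_comm
      (LinearMap.mulLeft ℝ (Aᵀ)).toContinuousLinearMap hFint
    simpa [LinearMap.mulLeft_apply] using this
  have hRup : ∫ t in Ioi (0:ℝ), F t * A = P * A := by
    have := ContinuousLinearMap.integral_comp_comm
      (LinearMap.mulRight ℝ A).toContinuousLinearMap hFint
    simpa [LinearMap.mulRight_apply] using this
  have hLint : IntegrableOn (fun t => Aᵀ * F t) (Ioi (0:ℝ)) :=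
    (LinearMap.mulLeft ℝ (Aᵀ)).toContinuousLinearMap.integrable_comp hFint
  have hRint : IntegrableOn (fun t => F t * A) (Ioi (0:ℝ)) :=
    (LinearMap.mulRight ℝ A).toContinuousLinearMap.integrable_comp hFint
  have heq : Aᵀ * P + P * A = -1 := by
    have hsplit : ∫ t in Ioi (0:ℝ), (Aᵀ * F t + F t * A) =
        (∫ t in Ioi (0:ℝ), Aᵀ * F t) + ∫ t in Ioi (0:ℝ), F t * A :=
      integral_add hLint hRint
    rw [hsplit, hLup, hRup, hF0] at hFTC
    rw [hFTC]
    abel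
  -- symmetry
  have hFsymm : ∀ t, (F t)ᵀ = F t := by
    intro t
    rw [hF]
    simp [Matrix.transpose_mul, Matrix.transpose_transpose]
  have hPsymm : Pᵀ = P := by
    have := ContinuousLinearMap.integral_comp_comm
      ((Matrix.transposeLinearEquiv (Fin n) (Fin n) ℝ ℝ).toLinearMap.toContinuousLinearMap) hFint
    rw [hP]
    calc (∫ t in Ioi (0:ℝ), F t)ᵀ = ∫ t in Ioi (0:ℝ), (F t)ᵀ := by
          simpa using this.symm
      _ = ∫ t in Ioi (0:ℝ), F t := by
          congr 1
          ext t : 1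
          exact hFsymm t
  -- positive definiteness
  have hPposdef : ∀ x : Fin n → ℝ, x ≠ 0 → 0 < x ⬝ᵥ (P *ᵥ x) := by
    intro x hx
    have hquad : ∀ t : ℝ, x ⬝ᵥ (F t *ᵥ x) = (E t *ᵥ x) ⬝ᵥ (E t *ᵥ x) := by
      intro t
      rw [hF, ← Matrix.mulVec_mulVec, Matrix.dotProduct_mulVec, Matrix.vecMul_transpose]
    have hquadpos : ∀ t : ℝ, 0 < x ⬝ᵥ (F t *ᵥ x) := by
      intro t
      rw [hquad t]
      have hw : E t *ᵥ x ≠ 0 := by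
        intro hcon
        have hunit : IsUnit (E t) := NormedSpace.isUnit_exp _
        have hinj := Matrix.mulVec_injective_iff_isUnit.2 hunit
        apply hx
        apply hinj
        rw [hcon, Matrix.mulVec_zero]
      have h1 : 0 ≤ (E t *ᵥ x) ⬝ᵥ (E t *ᵥ x) := Finset.sum_nonneg fun i _ => mul_self_nonneg _
      rcases h1.lt_or_eq with h | h
      · exact h
      · exact absurd ((dotProduct_self_eq_zero).1 h.symm) hw
    have ψlin : Matrix (Fin n) (Fin n) ℝ →ₗ[ℝ] ℝ :=
      { toFun := fun M => x ⬝ᵥ (M *ᵥ x)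
        map_add' := fun M M' => by simp [Matrix.add_mulVec, dotProduct_add]
        map_smul' := fun c M => by simp [Matrix.smul_mulVec, dotProduct_smul] }
    set ψ : Matrix (Fin n) (Fin n) ℝ →L[ℝ] ℝ := LinearMap.toContinuousLinearMap
      { toFun := fun M => x ⬝ᵥ (M *ᵥ x)
        map_add' := fun M M' => by simp [Matrix.add_mulVec, dotProduct_add]
        map_smul' := fun c M => by simp [Matrix.smul_mulVec, dotProduct_smul] } with hψdef
    have hψ : ∀ M : Matrix (Fin n) (Fin n) ℝ, ψ M = x ⬝ᵥ (M *ᵥ x) := fun M => rfl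
    have hPx : x ⬝ᵥ (P *ᵥ x) = ∫ t in Ioi (0:ℝ), x ⬝ᵥ (F t *ᵥ x) := by
      rw [← hψ P, hP, ← ContinuousLinearMap.integral_comp_comm ψ hFint]
      rfl
    rw [hPx]
    have hgi : IntegrableOn (fun t => x ⬝ᵥ (F t *ᵥ x)) (Ioi (0:ℝ)) := by
      have := ψ.integrable_comp hFint
      exact this
    rw [setIntegral_pos_iff_support_of_nonneg_ae]
    · have hsupp : (Function.support fun t => x ⬝ᵥ (F t *ᵥ x)) ∩ Set.Ioi (0:ℝ)
          = Set.Ioi (0:ℝ) :=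
        Set.inter_eq_right.2 (fun t _ => ne_of_gt (hquadpos t))
      rw [hsupp, Real.volume_Ioi]
      exact ENNReal.zero_lt_top
    · exact ae_of_all _ fun t => le_of_lt (hquadpos t)
    · exact hgi
  refine ⟨P, hPsymm, posDef_iff_dotProduct_mulVec.2 ⟨?_, ?_⟩, ?_⟩
  · -- IsHermitian
    show Pᴴ = P
    have hct : Pᴴ = Pᵀ := by
      ext i j
      simp [Matrix.conjTranspose_apply]
    rw [hct, hPsymm]
  · intro x hx
    rw [star_trivial]
    exact hPposdef x hx
  · rw [add_comm]
    exact heq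

end LyapunovAux

/-- For a Hurwitz matrix `A`, there exists a symmetric positive-definite matrix `P`
solving the Lyapunov equation `P·A + Aᵀ·P = -I`. -/
theorem lyapunov_equation_solution {n : ℕ} (A : Matrix (Fin n) (Fin n) ℝ)
    (hA : IsHurwitz A) :
    ∃ P : Matrix (Fin n) (Fin n) ℝ,
      P.IsSymm ∧ P.PosDef ∧ P * A + Aᵀ * P = -(1 : Matrix (Fin n) (Fin n) ℝ) := by
  exact lyapunov_equation_solution' A hA
end

section
/- Let ρ : ℝ → ℝ be differentiable and suppose there exists m > 0 with ρ'(x) ≥ m for all x ∈ ℝ. Let γ > 0, let u* ∈ ℝ be fixed, and let u : ℝ → ℝ be differentiable and satisfy the estimation law u̇(t) = γ·ρ'(u(t))·(ρ(u*) − ρ(u(t))) for all t ≥ 0. Then the estimation error ũ(t) = u* − u(t) converges exponentially to zero: |u(t) − u*| ≤ |u(0) − u*|·exp(−γ·m²·t) for all t ≥ 0. -/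
/-- MVT lower bound: if `deriv ρ ≥ m` then `ρ` grows at least linearly. -/
lemma mvt_lb (ρ : ℝ → ℝ) (hρ : Differentiable ℝ ρ)
    (m : ℝ) (hderiv : ∀ x : ℝ, m ≤ deriv ρ x)
    {a b : ℝ} (hab : a < b) : m * (b - a) ≤ ρ b - ρ a := by
  obtain ⟨c, _, hc⟩ := exists_hasDerivAt_eq_slope ρ (deriv ρ) hab
    (hρ.continuous.continuousOn)
    (fun x _ => (hρ x).hasDerivAt)
  have h : ρ b - ρ a = deriv ρ c * (b - a) := by
    rw [hc, div_mul_cancel₀]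
    exact sub_ne_zero.mpr (ne_of_gt hab)
  rw [h]
  exact mul_le_mul_of_nonneg_right (hderiv c) (by linarith)

lemma mvt_sq (ρ : ℝ → ℝ) (hρ : Differentiable ℝ ρ)
    (m : ℝ) (hderiv : ∀ x : ℝ, m ≤ deriv ρ x)
    (a b : ℝ) : m * (b - a) ^ 2 ≤ (ρ b - ρ a) * (b - a) := by
  rcases lt_trichotomy a b with h | h | h
  · have := mvt_lb ρ hρ m hderiv h
    nlinarith
  · simp [h]
  · have := mvt_lb ρ hρ m hderiv h
    nlinarith

/-- Exponential convergence of the dynamic mapping inversion (scalar, time-invariant case):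
if `ρ` is differentiable with `ρ' ≥ m > 0` and `u` obeys the estimation law
`u̇ = γ·ρ'(u)·(ρ(u*) − ρ(u))`, then `|u(t) − u*| ≤ |u(0) − u*|·exp(−γ·m²·t)` for `t ≥ 0`. -/
theorem mapping_inversion_exponential_convergence
    (ρ : ℝ → ℝ) (hρ : Differentiable ℝ ρ)
    (m : ℝ) (hm : 0 < m) (hderiv : ∀ x : ℝ, m ≤ deriv ρ x)
    (γ : ℝ) (hγ : 0 < γ) (ustar : ℝ)
    (u : ℝ → ℝ)
    (hu : ∀ t : ℝ, 0 ≤ t →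
      HasDerivAt u (γ * deriv ρ (u t) * (ρ ustar - ρ (u t))) t) :
    ∀ t : ℝ, 0 ≤ t →
      |u t - ustar| ≤ |u 0 - ustar| * Real.exp (-(γ * m ^ 2) * t) := by
  set a : ℝ := γ * m ^ 2 with ha
  set g : ℝ → ℝ := fun t => (u t - ustar) ^ 2 * Real.exp (2 * a * t) with hg
  -- g is antitone on Ici 0
  have hgderiv : ∀ t ∈ Set.Ici (0 : ℝ), HasDerivAt g
      ((2 * (u t - ustar) * (γ * deriv ρ (u t) * (ρ ustar - ρ (u t)))) * Real.exp (2 * a * t)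
        + (u t - ustar) ^ 2 * (Real.exp (2 * a * t) * (2 * a))) t := by
    intro t ht
    have h1 : HasDerivAt (fun t => (u t - ustar) ^ 2)
        (2 * (u t - ustar) * (γ * deriv ρ (u t) * (ρ ustar - ρ (u t)))) t := by
      have := ((hu t ht).sub_const ustar).pow 2
      simpa [Pi.pow_def, mul_comm, mul_assoc, mul_left_comm] using this
    have h2 : HasDerivAt (fun t => Real.exp (2 * a * t)) (Real.exp (2 * a * t) * (2 * a)) t := by
      have := ((hasDerivAt_id t).const_mul (2 * a)).exp
      simpa [mul_comm] using this
    exact h1.mul h2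
  have key : ∀ t ∈ Set.Ici (0 : ℝ),
      (2 * (u t - ustar) * (γ * deriv ρ (u t) * (ρ ustar - ρ (u t)))) * Real.exp (2 * a * t)
        + (u t - ustar) ^ 2 * (Real.exp (2 * a * t) * (2 * a)) ≤ 0 := by
    intro t _
    have hE : (0:ℝ) < Real.exp (2 * a * t) := Real.exp_pos _
    have hmvt : m * (u t - ustar) ^ 2 ≤ (ρ (u t) - ρ ustar) * (u t - ustar) := by
      have := mvt_sq ρ hρ m hderiv ustar (u t)
      simpa using this
    -- (ρ ustar - ρ (u t)) * (u t - ustar) ≤ - m * (u t - ustar)^2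
    have h3 : (ρ ustar - ρ (u t)) * (u t - ustar) ≤ - (m * (u t - ustar) ^ 2) := by nlinarith
    have hdu : m ≤ deriv ρ (u t) := hderiv (u t)
    have h4 : deriv ρ (u t) * ((ρ ustar - ρ (u t)) * (u t - ustar))
        ≤ m * (- (m * (u t - ustar) ^ 2)) := by
      have step1 := mul_le_mul_of_nonneg_left h3 (le_trans hm.le hdu)
      have step2 : deriv ρ (u t) * (- (m * (u t - ustar) ^ 2))
          ≤ m * (- (m * (u t - ustar) ^ 2)) :=
        mul_le_mul_of_nonpos_right hdu
          (by nlinarith [sq_nonneg (u t - ustar)])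
      linarith
    have h5 : (2 * (u t - ustar) * (γ * deriv ρ (u t) * (ρ ustar - ρ (u t))))
        + (u t - ustar) ^ 2 * (2 * a) ≤ 0 := by
      have := mul_le_mul_of_nonneg_left h4 (le_of_lt hγ)
      nlinarith
    nlinarith
  have hcont : ContinuousOn g (Set.Ici 0) := fun t ht =>
    ((hgderiv t ht).continuousAt).continuousWithinAt
  have hanti : AntitoneOn g (Set.Ici 0) := by
    apply antitoneOn_of_deriv_nonpos (convex_Ici 0) hcont
    · intro t ht
      rw [interior_Ici] at ht
      exact ((hgderiv t (Set.mem_Ici.mpr (le_of_lt ht))).differentiableAt).differentiableWithinAt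
    · intro t ht
      rw [interior_Ici] at ht
      rw [(hgderiv t (Set.mem_Ici.mpr (le_of_lt ht))).deriv]
      exact key t (Set.mem_Ici.mpr (le_of_lt ht))
  intro t ht
  have hgt : g t ≤ g 0 := hanti (Set.self_mem_Ici) ht ht
  simp only [hg, mul_zero, Real.exp_zero, mul_one] at hgt
  -- (u t - ustar)^2 * exp(2at) ≤ (u 0 - ustar)^2
  have hE : (0:ℝ) < Real.exp (2 * a * t) := Real.exp_pos _
  have h6 : (u t - ustar) ^ 2 ≤ ((u 0 - ustar) * Real.exp (-a * t)) ^ 2 := by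
    have hexp : Real.exp (-a * t) ^ 2 = (Real.exp (2 * a * t))⁻¹ := by
      rw [sq, ← Real.exp_add, ← Real.exp_neg]
      ring_nf
    rw [mul_pow, hexp, ← div_eq_mul_inv, le_div_iff₀ hE]
    exact hgt
  calc |u t - ustar| = Real.sqrt ((u t - ustar) ^ 2) := (Real.sqrt_sq_eq_abs _).symm
    _ ≤ Real.sqrt (((u 0 - ustar) * Real.exp (-a * t)) ^ 2) := Real.sqrt_le_sqrt h6
    _ = |(u 0 - ustar) * Real.exp (-a * t)| := Real.sqrt_sq_eq_abs _
    _ = |u 0 - ustar| * Real.exp (-a * t) := by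
        rw [abs_mul, abs_of_pos (Real.exp_pos _)]
    _ = |u 0 - ustar| * Real.exp (-(γ * m ^ 2) * t) := by rw [ha]
end

section
/- Let ρ : ℝ → ℝ be differentiable, μ : ℝ → ℝ, and suppose there exists σ₀ > 0 with μ(x)·ρ'(x) ≥ σ₀ for all x ∈ ℝ. Let γ > 0, fix v ∈ ℝ, and let u : ℝ → ℝ be differentiable with u̇(t) = γ·μ(u(t))·(v − ρ(u(t))) for all t ≥ 0. Then |v − ρ(u(t))| ≤ |v − ρ(u(0))|·exp(−γ·σ₀·t) for all t ≥ 0; that is, ρ(u(t)) converges to the demanded virtual input v exponentially fast, even if ρ is not injective. -/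
/-- Remark 1: even if `ρ` is not injective, the dynamic mapping inversion
`u̇ = γ·μ(u)·(v − ρ(u))` drives `ρ(u(t))` to the demanded virtual input `v`
exponentially fast, provided `μ(x)·ρ'(x) ≥ σ₀ > 0`. -/
theorem mapping_inversion_virtual_input_convergence
    (ρ : ℝ → ℝ) (hρ : Differentiable ℝ ρ)
    (μ : ℝ → ℝ) (σ₀ : ℝ) (hσ₀ : 0 < σ₀)
    (hcond : ∀ x : ℝ, σ₀ ≤ μ x * deriv ρ x)
    (γ : ℝ) (hγ : 0 < γ) (v : ℝ)
    (u : ℝ → ℝ)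
    (hu : ∀ t : ℝ, 0 ≤ t → HasDerivAt u (γ * μ (u t) * (v - ρ (u t))) t) :
    ∀ t : ℝ, 0 ≤ t →
      |v - ρ (u t)| ≤ |v - ρ (u 0)| * Real.exp (-(γ * σ₀) * t) := by
  set e : ℝ → ℝ := fun t => v - ρ (u t) with he
  set g : ℝ → ℝ := fun t => (e t) ^ 2 * Real.exp (2 * γ * σ₀ * t) with hg
  have hede : ∀ s : ℝ, 0 ≤ s →
      HasDerivAt e (-(deriv ρ (u s) * (γ * μ (u s) * (v - ρ (u s))))) s := by
    intro s hs
    have h1 : HasDerivAt (fun r => ρ (u r))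
        (deriv ρ (u s) * (γ * μ (u s) * (v - ρ (u s)))) s :=
      ((hρ (u s)).hasDerivAt).comp s (hu s hs)
    simpa using (h1.const_sub v)
  have hgd : ∀ s : ℝ, 0 ≤ s →
      HasDerivAt g
        ((2 * e s * (-(deriv ρ (u s) * (γ * μ (u s) * (v - ρ (u s)))))) *
          Real.exp (2 * γ * σ₀ * s)
        + (e s) ^ 2 * (Real.exp (2 * γ * σ₀ * s) * (2 * γ * σ₀))) s := by
    intro s hs
    have h1 : HasDerivAt (fun r => (e r) ^ 2)
        (2 * e s * (-(deriv ρ (u s) * (γ * μ (u s) * (v - ρ (u s)))))) s := by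
      simpa [mul_comm, mul_assoc] using ((hede s hs).fun_pow 2)
    have h2 : HasDerivAt (fun r => Real.exp (2 * γ * σ₀ * r))
        (Real.exp (2 * γ * σ₀ * s) * (2 * γ * σ₀)) s := by
      have := ((hasDerivAt_id s).const_mul (2 * γ * σ₀)).exp
      simpa [mul_comm] using this
    simpa [hg] using h1.fun_mul h2
  have hganti : AntitoneOn g (Set.Ici (0 : ℝ)) := by
    apply antitoneOn_of_deriv_nonpos (convex_Ici 0)
    · intro s hs
      exact ((hgd s hs).continuousAt).continuousWithinAt
    · intro s hs
      rw [interior_Ici] at hs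
      exact ((hgd s (le_of_lt hs)).differentiableAt).differentiableWithinAt
    · intro s hs
      rw [interior_Ici] at hs
      rw [(hgd s (le_of_lt hs)).deriv]
      have hexp : 0 < Real.exp (2 * γ * σ₀ * s) := Real.exp_pos _
      have hc := hcond (u s)
      have hes : e s = v - ρ (u s) := rfl
      have hkey : 2 * e s * (-(deriv ρ (u s) * (γ * μ (u s) * (v - ρ (u s)))))
          ≤ -(2 * γ * σ₀) * (e s) ^ 2 := by
        rw [hes]
        nlinarith [mul_nonneg (mul_nonneg hγ.le (sub_nonneg.2 hc))
          (sq_nonneg (v - ρ (u s)))]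
      nlinarith [sq_nonneg (e s), mul_pos hγ hσ₀]
  intro t ht
  have hgt : g t ≤ g 0 := hganti (Set.self_mem_Ici) ht ht
  have h0 : g 0 = (e 0) ^ 2 := by simp [hg]
  set b : ℝ := |v - ρ (u 0)| * Real.exp (-(γ * σ₀) * t) with hb
  have hbnn : 0 ≤ b := mul_nonneg (abs_nonneg _) (Real.exp_pos _).le
  have hEmul : Real.exp (-(γ * σ₀) * t) ^ 2 * Real.exp (2 * γ * σ₀ * t) = 1 := by
    rw [sq, ← Real.exp_add, ← Real.exp_add, ← Real.exp_zero]
    ring_nf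
  have hsq : (e t) ^ 2 ≤ b ^ 2 := by
    have he0 : e 0 = v - ρ (u 0) := rfl
    have habs : (v - ρ (u 0)) ^ 2 = |v - ρ (u 0)| ^ 2 := (sq_abs _).symm
    rw [h0, hg] at hgt
    have hEpos : (0:ℝ) < Real.exp (2 * γ * σ₀ * t) := Real.exp_pos _
    have h1 : e t ^ 2 * Real.exp (2 * γ * σ₀ * t) * Real.exp (-(γ * σ₀) * t) ^ 2
        ≤ (v - ρ (u 0)) ^ 2 * Real.exp (-(γ * σ₀) * t) ^ 2 := by
      have := mul_le_mul_of_nonneg_right hgt (sq_nonneg (Real.exp (-(γ * σ₀) * t)))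
      simpa using this
    have h2 : e t ^ 2 * Real.exp (2 * γ * σ₀ * t) * Real.exp (-(γ * σ₀) * t) ^ 2
        = e t ^ 2 := by
      rw [mul_assoc, mul_comm (Real.exp (2 * γ * σ₀ * t)), hEmul, mul_one]
    have h3 : b ^ 2 = (v - ρ (u 0)) ^ 2 * Real.exp (-(γ * σ₀) * t) ^ 2 := by
      rw [hb, mul_pow, sq_abs]
    linarith
  have hfin : |e t| ≤ b := by
    nlinarith [abs_nonneg (e t), sq_abs (e t)]
  simpa [he] using hfin
end

section
/- Let ρ : ℝ → ℝ be differentiable with ρ'(x) ≥ m > 0 for all x ∈ ℝ, let γ > 0, and let u* : ℝ → ℝ be differentiable with |u̇*(t)| ≤ d for all t ≥ 0, for some d ≥ 0. Let u : ℝ → ℝ be differentiable and satisfy u̇(t) = γ·ρ'(u(t))·(ρ(u*(t)) − ρ(u(t))) for all t ≥ 0. Then the estimation error ũ(t) = u*(t) − u(t) satisfies |ũ(t)| ≤ |ũ(0)|·exp(−γ·m²·t) + d/(γ·m²) for all t ≥ 0; in particular, ũ is globally uniformly ultimately bounded with ultimate bound d/(γ·m²). -/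
open Set Filter Real
open scoped Topology

/-- Input-to-state-stability of the input estimation-error subsystem Σ₂: with the gradient
choice `μ = ρ'`, `ρ' ≥ m > 0`, adaptation gain `γ > 0` and time-varying ideal input `u*` with
`|u̇*| ≤ d`, the estimation error `ũ = u* − u` of the law
`u̇ = γ·ρ'(u)·(ρ(u*) − ρ(u))` satisfies
`|ũ(t)| ≤ |ũ(0)|·exp(−γ·m²·t) + d/(γ·m²)` for all `t ≥ 0` (global uniform ultimate
boundedness with ultimate bound `d/(γ·m²)`). -/
theorem mapping_inversion_iss
    (ρ : ℝ → ℝ) (hρ : Differentiable ℝ ρ)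
    (m : ℝ) (hm : 0 < m) (hderiv : ∀ x : ℝ, m ≤ deriv ρ x)
    (γ : ℝ) (hγ : 0 < γ)
    (ustar : ℝ → ℝ) (hustar : Differentiable ℝ ustar)
    (d : ℝ) (hd : 0 ≤ d) (hrate : ∀ t : ℝ, 0 ≤ t → |deriv ustar t| ≤ d)
    (u : ℝ → ℝ)
    (hu : ∀ t : ℝ, 0 ≤ t →
      HasDerivAt u (γ * deriv ρ (u t) * (ρ (ustar t) - ρ (u t))) t) :
    ∀ t : ℝ, 0 ≤ t →
      |ustar t - u t| ≤
        |ustar 0 - u 0| * Real.exp (-(γ * m ^ 2) * t) + d / (γ * m ^ 2) := by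
  -- strong monotonicity of ρ
  have hmono : ∀ a b : ℝ, b ≤ a → m * (a - b) ≤ ρ a - ρ b := by
    intro a b hba
    have hmon : Monotone (fun x => ρ x - m * x) := by
      have hdiff : Differentiable ℝ (fun x => ρ x - m * x) :=
        fun x => (hρ x).sub (differentiableAt_id.const_mul m)
      apply monotone_of_deriv_nonneg hdiff
      intro x
      have hda : HasDerivAt (fun y => ρ y - m * y) (deriv ρ x - m) x := by
        have h := (hρ x).hasDerivAt.sub ((hasDerivAt_id x).const_mul m)
        simp only [mul_one] at h
        exact h
      rw [hda.deriv]
      linarith [hderiv x]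
    have := hmon hba
    simp only at this
    linarith
  have hquad : ∀ a b : ℝ, m * (a - b) ^ 2 ≤ (ρ a - ρ b) * (a - b) := by
    intro a b
    rcases le_total b a with h | h
    · nlinarith [hmono a b h]
    · nlinarith [hmono b a h]
  intro T hT
  set k : ℝ := γ * m ^ 2 with hk
  have hk0 : 0 < k := by positivity
  set g : ℝ → ℝ := fun s => ustar s - u s with hgdef
  set g' : ℝ → ℝ := fun s =>
    deriv ustar s - γ * deriv ρ (u s) * (ρ (ustar s) - ρ (u s)) with hg'def
  have hgderiv : ∀ s : ℝ, 0 ≤ s → HasDerivAt g (g' s) s := fun s hs =>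
    ((hustar s).hasDerivAt.sub (hu s hs))
  set F : ℝ → ℝ := fun s => |g s| with hFdef
  set F' : ℝ → ℝ := fun s => if g s = 0 then |g' s| else |g s|⁻¹ * (g s * g' s) with hF'def
  have hcont : ContinuousOn F (Icc 0 T) :=
    continuous_abs.comp_continuousOn
      (fun s hs => ((hgderiv s hs.1).continuousAt).continuousWithinAt)
  have hslope : ∀ x ∈ Ico (0:ℝ) T, ∀ r, F' x < r →
      ∃ᶠ z in 𝓝[>] x, (z - x)⁻¹ * (F z - F x) < r := by
    intro x hx r hr
    have hdg := hgderiv x hx.1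
    have hts : Tendsto (slope g x) (𝓝[>] x) (𝓝 (g' x)) :=
      (hasDerivAt_iff_tendsto_slope.mp hdg).mono_left
        (nhdsWithin_mono x fun z hz => ne_of_gt hz)
    have htend : Tendsto (fun z => (z - x)⁻¹ * (F z - F x)) (𝓝[>] x) (𝓝 (F' x)) := by
      rcases eq_or_ne (g x) 0 with h0 | h0
      · have : F' x = |g' x| := by simp [hF'def, h0]
        rw [this]
        apply (hts.abs).congr'
        filter_upwards [self_mem_nhdsWithin] with z hz
        have hzx : (0:ℝ) < z - x := sub_pos.2 hz
        show |slope g x z| = (z - x)⁻¹ * (F z - F x)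
        rw [slope_def_field, h0, sub_zero, abs_div, abs_of_pos hzx]
        simp [hFdef, h0, div_eq_inv_mul]
      · have hgc : ContinuousAt g x := hdg.continuousAt
        rcases lt_or_gt_of_ne h0 with hneg | hpos
        · have hF' : F' x = -(g' x) := by
            rw [hF'def]
            simp only [if_neg h0]
            rw [abs_of_neg hneg, inv_mul_eq_div, div_neg, mul_comm, mul_div_assoc,
              div_self h0, mul_one]
          rw [hF']
          have hev : ∀ᶠ z in 𝓝[>] x, g z < 0 :=
            eventually_nhdsWithin_of_eventually_nhds (hgc (Iio_mem_nhds hneg))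
          apply (hts.neg).congr'
          filter_upwards [hev] with z hz
          simp only [slope_def_field, hFdef, abs_of_neg hz, abs_of_neg hneg,
            div_eq_inv_mul]
          ring
        · have hF' : F' x = g' x := by
            rw [hF'def]
            simp only [if_neg h0]
            rw [abs_of_pos hpos]
            field_simp
          rw [hF']
          have hev : ∀ᶠ z in 𝓝[>] x, 0 < g z :=
            eventually_nhdsWithin_of_eventually_nhds (hgc (Ioi_mem_nhds hpos))
          apply hts.congr'
          filter_upwards [hev] with z hz
          simp only [slope_def_field, hFdef, abs_of_pos hz, abs_of_pos hpos,
            div_eq_inv_mul]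
    exact ((htend.eventually (Filter.Tendsto.eventually_lt_const hr tendsto_id)).frequently)
  have hbound : ∀ x ∈ Ico (0:ℝ) T, F' x ≤ (-k) * F x + d := by
    intro x hx
    rcases eq_or_ne (g x) 0 with h0 | h0
    · have heq : ustar x = u x := by
        have := sub_eq_zero.mp h0
        exact this
      have : F' x = |deriv ustar x| := by
        simp [hF'def, hg'def, h0, heq]
      rw [this]
      have : F x = 0 := by simp [hFdef, h0]
      rw [this, mul_zero, zero_add]
      exact hrate x hx.1
    · have habs : 0 < |g x| := abs_pos.2 h0
      rw [hF'def]
      simp only [if_neg h0]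
      rw [hFdef]
      rw [inv_mul_le_iff₀ habs]
      show g x * g' x ≤ |g x| * (-k * |g x| + d)
      have h1 : g x * deriv ustar x ≤ |g x| * d := by
        calc g x * deriv ustar x ≤ |g x * deriv ustar x| := le_abs_self _
        _ = |g x| * |deriv ustar x| := abs_mul _ _
        _ ≤ |g x| * d := by
            exact mul_le_mul_of_nonneg_left (hrate x hx.1) (abs_nonneg _)
      have h2 : m * (g x) ^ 2 ≤ (ρ (ustar x) - ρ (u x)) * (g x) := hquad (ustar x) (u x)
      have h3 : m ≤ deriv ρ (u x) := hderiv (u x)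
      have hsq : |g x| ^ 2 = (g x) ^ 2 := sq_abs _
      have hgg' : g x * g' x ≤ |g x| * d - k * (g x) ^ 2 := by
        have expand : g x * g' x
            = g x * deriv ustar x - γ * deriv ρ (u x) * ((ρ (ustar x) - ρ (u x)) * g x) := by
          rw [hg'def]; ring
        rw [expand]
        have hmg : 0 ≤ m * g x ^ 2 := by positivity
        have e1 : γ * m ≤ γ * deriv ρ (u x) := mul_le_mul_of_nonneg_left h3 hγ.le
        have e2 : γ * m * (m * g x ^ 2) ≤ γ * deriv ρ (u x) * (m * g x ^ 2) :=
          mul_le_mul_of_nonneg_right e1 hmg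
        have hgd : 0 ≤ γ * deriv ρ (u x) := mul_nonneg hγ.le (hm.le.trans h3)
        have e3 : γ * deriv ρ (u x) * (m * g x ^ 2)
            ≤ γ * deriv ρ (u x) * ((ρ (ustar x) - ρ (u x)) * g x) :=
          mul_le_mul_of_nonneg_left h2 hgd
        have h4 : γ * m * (m * (g x)^2)
            ≤ γ * deriv ρ (u x) * ((ρ (ustar x) - ρ (u x)) * g x) := e2.trans e3
        have : k * (g x)^2 = γ * m * (m * (g x)^2) := by rw [hk]; ring
        linarith
      calc g x * g' x ≤ |g x| * d - k * (g x) ^ 2 := hgg'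
        _ = |g x| * (-k * |g x| + d) := by rw [← hsq]; ring
  have key := le_gronwallBound_of_liminf_deriv_right_le (f := F) (f' := F')
    (δ := F 0) (K := -k) (ε := d) (a := 0) (b := T)
    hcont hslope le_rfl hbound T (right_mem_Icc.2 hT)
  rw [sub_zero, gronwallBound_of_K_ne_0 (neg_ne_zero.2 hk0.ne')] at key
  have hE : (0:ℝ) < Real.exp (-k * T) := Real.exp_pos _
  have hE1 : Real.exp (-k * T) ≤ 1 := by
    apply Real.exp_le_one_iff.2
    nlinarith
  have htail : d / (-k) * (Real.exp (-k * T) - 1) ≤ d / k := by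
    rw [div_neg]
    have hdk : 0 ≤ d / k := div_nonneg hd hk0.le
    nlinarith
  calc |ustar T - u T| = F T := rfl
    _ ≤ F 0 * Real.exp (-k * T) + d / (-k) * (Real.exp (-k * T) - 1) := key
    _ ≤ F 0 * Real.exp (-k * T) + d / k := by linarith
    _ = |ustar 0 - u 0| * Real.exp (-(γ * m ^ 2) * T) + d / (γ * m ^ 2) := by
        rw [hk]
end

section
/- Let M and P be n×n real matrices with P symmetric, P·M + Mᵀ·P = −I, and m·‖x‖² ≤ xᵀ·P·x ≤ M̄·‖x‖² for all x ∈ ℝⁿ with 0 < m ≤ M̄. Let w : ℝ → ℝⁿ be continuous with ‖w(t)‖ ≤ w̄ for all t ≥ 0, for some w̄ ≥ 0, and let e : ℝ → ℝⁿ be differentiable with ė(t) = M·e(t) + w(t) for all t ≥ 0. Then the solution e is globally uniformly ultimately bounded; specifically, limsup_{t→∞} ‖e(t)‖ ≤ 2·‖P‖·w̄·√(M̄/m), where ‖P‖ denotes the operator norm of P. -/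
set_option maxHeartbeats 1000000


open Matrix Filter
open scoped RealInnerProductSpace

/-- Global uniform ultimate boundedness of the perturbed tracking-error dynamics: if `P` is
symmetric with `P·M + Mᵀ·P = −I` and `m‖x‖² ≤ xᵀPx ≤ M̄‖x‖²` (`0 < m ≤ M̄`), and the
perturbation `w` is continuous with `‖w(t)‖ ≤ w̄`, then every solution of `ė = M e + w`
satisfies `limsup_{t→∞} ‖e(t)‖ ≤ 2‖P‖·w̄·√(M̄/m)`, `‖P‖` being the operator norm of `P`. -/
theorem perturbed_lyapunov_uub {n : ℕ}
    (M P : Matrix (Fin n) (Fin n) ℝ) (hPsymm : P.IsSymm)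
    (hLyap : P * M + Mᵀ * P = -(1 : Matrix (Fin n) (Fin n) ℝ))
    (m Mb : ℝ) (hm : 0 < m) (hmM : m ≤ Mb)
    (hlow : ∀ x : EuclideanSpace ℝ (Fin n),
      m * ‖x‖ ^ 2 ≤ ⟪x, Matrix.toEuclideanCLM (𝕜 := ℝ) P x⟫)
    (hupp : ∀ x : EuclideanSpace ℝ (Fin n),
      ⟪x, Matrix.toEuclideanCLM (𝕜 := ℝ) P x⟫ ≤ Mb * ‖x‖ ^ 2)
    (w : ℝ → EuclideanSpace ℝ (Fin n)) (hwcont : Continuous w)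
    (wbar : ℝ) (hwbar : 0 ≤ wbar) (hw : ∀ t : ℝ, 0 ≤ t → ‖w t‖ ≤ wbar)
    (e : ℝ → EuclideanSpace ℝ (Fin n))
    (he : ∀ t : ℝ, 0 ≤ t →
      HasDerivAt e (Matrix.toEuclideanCLM (𝕜 := ℝ) M (e t) + w t) t) :
    limsup (fun t : ℝ => ‖e t‖) atTop ≤
      2 * ‖Matrix.toEuclideanCLM (𝕜 := ℝ) P‖ * wbar * Real.sqrt (Mb / m) := by
  set Pc := Matrix.toEuclideanCLM (𝕜 := ℝ) P with hPcdef
  set Ec := Matrix.toEuclideanCLM (𝕜 := ℝ) M with hEcdef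
  set c := 2 * ‖Pc‖ * wbar with hcdef
  have hc0 : 0 ≤ c := by positivity
  have hMb : 0 < Mb := lt_of_lt_of_le hm hmM
  -- star P = P
  have hstarP : star P = P := by
    ext i j
    simpa using hPsymm.apply i j
  have hPadj : ContinuousLinearMap.adjoint Pc = Pc := by
    rw [← ContinuousLinearMap.star_eq_adjoint, hPcdef, ← map_star, hstarP]
  have hsym : ∀ x y : EuclideanSpace ℝ (Fin n), ⟪Pc x, y⟫ = ⟪x, Pc y⟫ := by
    intro x y
    conv_lhs => rw [← hPadj]
    exact ContinuousLinearMap.adjoint_inner_left Pc y x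
  -- quadratic Lyapunov identity
  have hquad : ∀ x : EuclideanSpace ℝ (Fin n),
      ⟪Ec x, Pc x⟫ + ⟪x, Pc (Ec x)⟫ = -‖x‖ ^ 2 := by
    intro x
    have h1 : ⟪Ec x, Pc x⟫ = ⟪x, Matrix.toEuclideanCLM (𝕜 := ℝ) (Mᵀ * P) x⟫ := by
      rw [← ContinuousLinearMap.adjoint_inner_right]
      rw [← ContinuousLinearMap.star_eq_adjoint, hEcdef, ← map_star]
      have hstarM : star M = Mᵀ := by
        ext i j; simp [Matrix.star_apply]
      rw [hstarM, _root_.map_mul]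
      rfl
    have h2 : ⟪x, Pc (Ec x)⟫ = ⟪x, Matrix.toEuclideanCLM (𝕜 := ℝ) (P * M) x⟫ := by
      rw [_root_.map_mul]; rfl
    rw [h1, h2, ← inner_add_right]
    have : Matrix.toEuclideanCLM (𝕜 := ℝ) (Mᵀ * P) x
        + Matrix.toEuclideanCLM (𝕜 := ℝ) (P * M) x
        = Matrix.toEuclideanCLM (𝕜 := ℝ) (P * M + Mᵀ * P) x := by
      rw [_root_.map_add]; simp [add_comm]
    rw [this, hLyap, _root_.map_neg, _root_.map_one]
    simp only [ContinuousLinearMap.neg_apply, ContinuousLinearMap.one_apply,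
      inner_neg_right, real_inner_self_eq_norm_sq]
  -- the Lyapunov function
  set V : ℝ → ℝ := fun t => ⟪e t, Pc (e t)⟫ with hVdef
  have hVder : ∀ t : ℝ, 0 ≤ t →
      HasDerivAt V (-‖e t‖ ^ 2 + 2 * ⟪w t, Pc (e t)⟫) t := by
    intro t ht
    have h1 : HasDerivAt (fun s => Pc (e s)) (Pc (Ec (e t) + w t)) t :=
      Pc.hasFDerivAt.comp_hasDerivAt t (he t ht)
    have h2 := (he t ht).inner ℝ h1
    convert h2 using 1
    case e'_4 => rfl
    case e'_5 => rfl
    have hsw : ⟪e t, Pc (w t)⟫ = ⟪w t, Pc (e t)⟫ := by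
      rw [← hsym]; exact real_inner_comm _ _
    have := hquad (e t)
    simp only [map_add, inner_add_left, inner_add_right]
    linarith [hsw, this]
  have hV0 : ∀ t : ℝ, 0 ≤ V t := fun t =>
    le_trans (by positivity) (hlow (e t))
  have hVcont : ∀ t : ℝ, 0 ≤ t → ContinuousAt V t := fun t ht =>
    (hVder t ht).continuousAt
  -- derivative bound
  have hVle : ∀ t : ℝ, 0 ≤ t →
      -‖e t‖ ^ 2 + 2 * ⟪w t, Pc (e t)⟫ ≤ -‖e t‖ ^ 2 + c * ‖e t‖ := by
    intro t ht
    have h1 : ⟪w t, Pc (e t)⟫ ≤ ‖w t‖ * ‖Pc (e t)‖ := real_inner_le_norm _ _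
    have h2 : ‖Pc (e t)‖ ≤ ‖Pc‖ * ‖e t‖ := Pc.le_opNorm _
    have h3 : ‖w t‖ ≤ wbar := hw t ht
    have h4 : ‖w t‖ * ‖Pc (e t)‖ ≤ wbar * (‖Pc‖ * ‖e t‖) := by
      apply mul_le_mul h3 h2 (norm_nonneg _) hwbar
    rw [hcdef]; nlinarith
  -- main eventual estimate, for every ε > 0
  have main : ∀ ε : ℝ, 0 < ε →
      ∀ᶠ t in atTop, ‖e t‖ ≤ (c + ε) * Real.sqrt (Mb / m) := by
    intro ε hε
    set L := Mb * (c + ε) ^ 2 with hLdef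
    set δ := ε * (c + ε) with hδdef
    have hδ : 0 < δ := by positivity
    -- derivative strictly decreases above level L
    have hderneg : ∀ t : ℝ, 0 ≤ t → L ≤ V t →
        -‖e t‖ ^ 2 + 2 * ⟪w t, Pc (e t)⟫ ≤ -δ := by
      intro t ht hL
      have h1 : V t ≤ Mb * ‖e t‖ ^ 2 := hupp (e t)
      have h2 : (c + ε) ^ 2 ≤ ‖e t‖ ^ 2 := by
        rw [hLdef] at hL; nlinarith
      have h3 : c + ε ≤ ‖e t‖ := by nlinarith [norm_nonneg (e t)]
      have h4 := hVle t ht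
      rw [hδdef]; nlinarith [norm_nonneg (e t)]
    -- comparison on intervals where V stays above L
    have key : ∀ a b : ℝ, 0 ≤ a → a ≤ b → (∀ t ∈ Set.Ioo a b, L ≤ V t) →
        V b + δ * b ≤ V a + δ * a := by
      intro a b ha hab hmem
      rcases eq_or_lt_of_le hab with rfl | hab
      · exact le_rfl
      set g : ℝ → ℝ := fun t => V t + δ * t with hgdef
      have hgder : ∀ t ∈ Set.Ioo a b,
          HasDerivAt g (-‖e t‖ ^ 2 + 2 * ⟪w t, Pc (e t)⟫ + δ) t := by
        intro t htm
        have hlin : HasDerivAt (fun s : ℝ => δ * s) δ t := by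
          simpa using (hasDerivAt_id t).const_mul δ
        exact (hVder t (le_trans ha htm.1.le)).add hlin
      have hcont : ContinuousOn g (Set.Icc a b) := by
        intro t htm
        exact ((hVcont t (le_trans ha htm.1)).add
          (continuous_const.mul continuous_id).continuousAt).continuousWithinAt
      have hanti : AntitoneOn g (Set.Icc a b) := by
        apply antitoneOn_of_deriv_nonpos (convex_Icc a b) hcont
        · intro t htm
          rw [interior_Icc] at htm
          exact ((hgder t htm).differentiableAt).differentiableWithinAt
        · intro t htm
          rw [interior_Icc] at htm
          rw [(hgder t htm).deriv]
          have := hderneg t (le_trans ha htm.1.le) (hmem t htm)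
          linarith
      exact hanti (Set.left_mem_Icc.2 hab.le) (Set.right_mem_Icc.2 hab.le) hab.le
    -- escape: V eventually dips below L
    have escape : ∃ t₀ : ℝ, 0 ≤ t₀ ∧ V t₀ ≤ L := by
      by_contra h
      push_neg at h
      set T := V 0 / δ + 1 with hTdef
      have hT : 0 ≤ T := by
        have h0 := div_nonneg (hV0 0) hδ.le
        rw [hTdef]; linarith
      have hk := key 0 T le_rfl hT (fun t htm => (h t htm.1.le).le)
      have hδT : δ * T = V 0 + δ := by
        rw [hTdef]; field_simp
      nlinarith [hV0 T, hV0 0]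
    obtain ⟨t₀, ht₀, hVt₀⟩ := escape
    -- invariance: V stays below L forever
    have inv : ∀ t : ℝ, t₀ ≤ t → V t ≤ L := by
      intro t₁ ht₁
      by_contra hgt
      push_neg at hgt
      set S := {t : ℝ | t ∈ Set.Icc t₀ t₁ ∧ V t ≤ L} with hSdef
      have hne : S.Nonempty := ⟨t₀, ⟨le_rfl, ht₁⟩, hVt₀⟩
      have hbdd : BddAbove S := ⟨t₁, fun x hx => hx.1.2⟩
      have hclosed : IsClosed S := by
        have hVcOn : ContinuousOn V (Set.Icc t₀ t₁) := fun t htm =>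
          (hVcont t (le_trans ht₀ htm.1)).continuousWithinAt
        have : S = Set.Icc t₀ t₁ ∩ V ⁻¹' Set.Iic L := rfl
        rw [this]
        exact hVcOn.preimage_isClosed_of_isClosed isClosed_Icc isClosed_Iic
      set s := sSup S with hsdef
      have hsS : s ∈ S := hclosed.csSup_mem hne hbdd
      have hslt : s < t₁ :=
        lt_of_le_of_ne hsS.1.2 (fun hco => absurd hsS.2 (by rw [hco]; exact not_le.2 hgt))
      have habove : ∀ t ∈ Set.Ioo s t₁, L ≤ V t := by
        intro t htm
        by_contra hle
        push_neg at hle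
        exact absurd (le_csSup hbdd ⟨⟨le_trans hsS.1.1 htm.1.le, htm.2.le⟩, hle.le⟩)
          (not_le.2 htm.1)
      have hk := key s t₁ (le_trans ht₀ hsS.1.1) hslt.le habove
      nlinarith [hsS.2, mul_pos hδ (sub_pos.2 hslt)]
    -- convert to a norm bound
    rw [eventually_atTop]
    refine ⟨t₀, fun t ht => ?_⟩
    have h1 : m * ‖e t‖ ^ 2 ≤ L := le_trans (hlow (e t)) (inv t ht)
    have h2 : ‖e t‖ ^ 2 ≤ L / m := by
      rw [le_div_iff₀ hm]; nlinarith
    calc ‖e t‖ = Real.sqrt (‖e t‖ ^ 2) := (Real.sqrt_sq (norm_nonneg _)).symm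
      _ ≤ Real.sqrt (L / m) := Real.sqrt_le_sqrt h2
      _ = (c + ε) * Real.sqrt (Mb / m) := by
          rw [hLdef, show Mb * (c + ε) ^ 2 / m = (c + ε) ^ 2 * (Mb / m) by ring,
            Real.sqrt_mul (by positivity), Real.sqrt_sq (by positivity)]
  -- pass to the limsup
  have hcob : IsCoboundedUnder (· ≤ ·) atTop (fun t : ℝ => ‖e t‖) :=
    isCoboundedUnder_le_of_eventually_le atTop
      (Eventually.of_forall fun t => norm_nonneg (e t))
  have hlim : ∀ ε : ℝ, 0 < ε →
      limsup (fun t : ℝ => ‖e t‖) atTop ≤ (c + ε) * Real.sqrt (Mb / m) := fun ε hε =>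
    limsup_le_of_le hcob (main ε hε)
  have hs : 0 < Real.sqrt (Mb / m) := Real.sqrt_pos.2 (by positivity)
  refine le_of_forall_pos_le_add fun η hη => ?_
  have := hlim (η / Real.sqrt (Mb / m)) (by positivity)
  calc limsup (fun t : ℝ => ‖e t‖) atTop
      ≤ (c + η / Real.sqrt (Mb / m)) * Real.sqrt (Mb / m) := this
    _ = c * Real.sqrt (Mb / m) + η := by field_simp
end
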